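/- Let p ∈ ℕ (p ≥ 1). On the vertex set {1, …, p+3} define the p-simplices σ_j := {1, …, p+2} \ {j} and ρ_j := ({1, …, p+1} ∪ {p+3}) \ {j} for j ∈ {1, …, p+1}, and let L_p := {τ ⊆ {1, …, p+3} : τ ≠ ∅ and (τ ⊆ σ_j or τ ⊆ ρ_j for some j ∈ {1, …, p+1})}. Then β_p(L_p) = 1, and for every subset I ⊆ {1, …, p+3} with |I| = p+2, the induced subcomplex L_p[I] satisfies β_p(L_p[I]) = 0. -/

import Mathlib

namespace RSC

variable {V : Type*} [DecidableEq V]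

/-- A finite abstract simplicial complex on vertex type `V`. -/
structure SC (V : Type*) [DecidableEq V] where
  simplices : Finset (Finset V)
  nonempty_mem : ∀ σ ∈ simplices, σ.Nonempty
  down_closed : ∀ σ ∈ simplices, ∀ τ ⊆ σ, τ.Nonempty → τ ∈ simplices

namespace SC

/-- The `p`-simplices (cardinality `p+1`). -/
def simplicesDim (K : SC V) (p : ℕ) : Finset (Finset V) :=
  K.simplices.filter fun σ => σ.card = p + 1

/-- The number of `p`-simplices. -/
def fnum (K : SC V) (p : ℕ) : ℕ := (K.simplicesDim p).card

/-- The dimension of a finite simplicial complex. -/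
def dimension (K : SC V) : ℕ := K.simplices.sup fun σ => σ.card - 1

/-- The `p`-th chain group over `ℤ₂`. -/
abbrev Chain (K : SC V) (p : ℕ) : Type _ := ↥(K.simplicesDim p) → ZMod 2

/-- The boundary map `∂_{p+1} : C_{p+1} → C_p`. -/
def boundary (K : SC V) (p : ℕ) : Chain K (p + 1) →ₗ[ZMod 2] Chain K p where
  toFun f := fun τ => ∑ σ : ↥(K.simplicesDim (p + 1)),
    if (τ : Finset V) ⊆ (σ : Finset V) then f σ else 0
  map_add' f g := by
    funext τ
    simp only [Pi.add_apply]
    rw [← Finset.sum_add_distrib]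
    refine Finset.sum_congr rfl fun σ _ => ?_
    split <;> simp
  map_smul' c f := by
    funext τ
    simp only [Pi.smul_apply, smul_eq_mul, RingHom.id_apply]
    rw [Finset.mul_sum]
    refine Finset.sum_congr rfl fun σ _ => ?_
    split <;> simp

/-- The rank of the cycle space `Z_p = ker ∂_p` (with `∂_0 = 0`). -/
noncomputable def cycleRank (K : SC V) : ℕ → ℕ
  | 0 => Module.finrank (ZMod 2) (Chain K 0)
  | (q + 1) => Module.finrank (ZMod 2) (LinearMap.ker (K.boundary q))

/-- The `p`-th Betti number over `ℤ₂`: `dim Z_p − dim B_p`. -/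
noncomputable def betti (K : SC V) (p : ℕ) : ℕ :=
  K.cycleRank p - Module.finrank (ZMod 2) (LinearMap.range (K.boundary p))

/-- The induced subcomplex on a vertex set `I`. -/
def induced (K : SC V) (I : Finset V) : SC V where
  simplices := K.simplices.filter fun σ => σ ⊆ I
  nonempty_mem := fun σ hσ => K.nonempty_mem σ (Finset.mem_filter.mp hσ).1
  down_closed := fun σ hσ τ hτσ hτ => by
    rw [Finset.mem_filter] at hσ ⊢
    exact ⟨K.down_closed σ hσ.1 τ hτσ hτ, hτσ.trans hσ.2⟩

/-- The `j`-skeleton. -/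
def skeleton (K : SC V) (j : ℕ) : SC V where
  simplices := K.simplices.filter fun σ => σ.card ≤ j + 1
  nonempty_mem := fun σ hσ => K.nonempty_mem σ (Finset.mem_filter.mp hσ).1
  down_closed := fun σ hσ τ hτσ hτ => by
    rw [Finset.mem_filter] at hσ ⊢
    exact ⟨K.down_closed σ hσ.1 τ hτσ hτ, (Finset.card_le_card hτσ).trans hσ.2⟩

/-- The subcomplex obtained by deleting the vertex `v`. -/
def deleteVertex (K : SC V) (v : V) : SC V where
  simplices := K.simplices.filter fun σ => v ∉ σ
  nonempty_mem := fun σ hσ => K.nonempty_mem σ (Finset.mem_filter.mp hσ).1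
  down_closed := fun σ hσ τ hτσ hτ => by
    rw [Finset.mem_filter] at hσ ⊢
    exact ⟨K.down_closed σ hσ.1 τ hτσ hτ, fun hv => hσ.2 (hτσ hv)⟩

/-- The vertex set of `K`. -/
def verts (K : SC V) : Finset V := K.simplices.sup id

/-- `v` is a vertex of `K`. -/
def IsVertex (K : SC V) (v : V) : Prop := ({v} : Finset V) ∈ K.simplices

/-- The `n`-simplex degree of a vertex `v`. -/
def deg (K : SC V) (n : ℕ) (v : V) : ℕ :=
  (K.simplices.filter fun σ => v ∈ σ ∧ σ.card = n + 1).card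

/-- Two vertices are joined by a path of edges of `K`. -/
def Reachable (K : SC V) (v w : V) : Prop :=
  Relation.ReflTransGen (fun a b => ({a, b} : Finset V) ∈ K.simplices) v w

/-- The Euler characteristic of `K`. -/
noncomputable def euler (K : SC V) : ℤ :=
  ∑ i ∈ Finset.range (K.dimension + 1), (-1 : ℤ) ^ i * K.fnum i

end SC

end RSC

namespace RSC

open SC

/-- `σ_j = {1, …, p+2} \ {j}`. -/
def sigmaSimp (p j : ℕ) : Finset ℕ := (Finset.Icc 1 (p + 2)).erase j

/-- `ρ_j = ({1, …, p+1} ∪ {p+3}) \ {j}`. -/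
def rhoSimp (p j : ℕ) : Finset ℕ := ((Finset.Icc 1 (p + 1)) ∪ {p + 3}).erase j

/-- The defining property of the simplices of `L_p`: nonempty and contained in
some `σ_j` or `ρ_j` with `j ∈ {1, …, p+1}`. -/
def LpPred (p : ℕ) (τ : Finset ℕ) : Prop :=
  0 < τ.card ∧ ∃ j ∈ Finset.Icc 1 (p + 1), τ ⊆ sigmaSimp p j ∨ τ ⊆ rhoSimp p j

instance (p : ℕ) : DecidablePred (LpPred p) := fun τ => by
  unfold LpPred; infer_instance

/-- The complex `L_p` generated by the `p`-simplices `σ_j, ρ_j`, `j ∈ {1, …, p+1}`. -/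
def Lp (p : ℕ) : SC ℕ where
  simplices := (Finset.Icc 1 (p + 3)).powerset.filter (LpPred p)
  nonempty_mem := fun τ hτ =>
    Finset.card_pos.mp ((Finset.mem_filter.mp hτ).2 : LpPred p τ).1
  down_closed := fun τ hτ τ' hτ' hne => by
    rw [Finset.mem_filter, Finset.mem_powerset] at hτ ⊢
    obtain ⟨hsub, -, j, hj, hcase⟩ := hτ
    exact ⟨hτ'.trans hsub, Finset.card_pos.mpr hne, j, hj,
      hcase.imp hτ'.trans hτ'.trans⟩

end RSC
namespace RSC
open SC Finset

lemma zmod2_add_eq_zero : ∀ a b : ZMod 2, a + b = 0 → a = b := by decide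

lemma mem_simplicesDim' {V : Type*} [DecidableEq V] {K : SC V} {n : ℕ} {σ : Finset V} :
    σ ∈ K.simplicesDim n ↔ σ ∈ K.simplices ∧ σ.card = n + 1 := Finset.mem_filter

lemma mem_Lp_simplices {p : ℕ} {τ : Finset ℕ} :
    τ ∈ (Lp p).simplices ↔ τ ⊆ Finset.Icc 1 (p+3) ∧ 0 < τ.card ∧
      ∃ j ∈ Finset.Icc 1 (p+1), τ ⊆ sigmaSimp p j ∨ τ ⊆ rhoSimp p j := by
  simp only [Lp, LpPred, Finset.mem_filter, Finset.mem_powerset, and_assoc]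

lemma subset_sigmaSimp {p j : ℕ} {τ : Finset ℕ} :
    τ ⊆ sigmaSimp p j ↔ τ ⊆ Finset.Icc 1 (p+2) ∧ j ∉ τ := Finset.subset_erase

lemma subset_rhoSimp {p j : ℕ} {τ : Finset ℕ} :
    τ ⊆ rhoSimp p j ↔ τ ⊆ Finset.Icc 1 (p+1) ∪ {p+3} ∧ j ∉ τ := Finset.subset_erase

lemma mem_sigmaSimp {p j x : ℕ} : x ∈ sigmaSimp p j ↔ x ≠ j ∧ (1 ≤ x ∧ x ≤ p+2) := by
  simp [sigmaSimp, Finset.mem_erase, Finset.mem_Icc]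

lemma mem_rhoSimp {p j x : ℕ} :
    x ∈ rhoSimp p j ↔ x ≠ j ∧ ((1 ≤ x ∧ x ≤ p+1) ∨ x = p+3) := by
  simp [rhoSimp, Finset.mem_erase, Finset.mem_union, Finset.mem_Icc]
  tauto

lemma sigmaSimp_card {p j : ℕ} (hj : j ∈ Finset.Icc 1 (p+1)) :
    (sigmaSimp p j).card = p + 1 := by
  rw [Finset.mem_Icc] at hj
  rw [sigmaSimp, Finset.card_erase_of_mem (by rw [Finset.mem_Icc]; omega), Nat.card_Icc]
  omega

lemma rhoSimp_card {p j : ℕ} (hj : j ∈ Finset.Icc 1 (p+1)) :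
    (rhoSimp p j).card = p + 1 := by
  rw [Finset.mem_Icc] at hj
  have hd : Disjoint (Finset.Icc 1 (p+1)) ({p+3} : Finset ℕ) := by
    simp [Finset.disjoint_singleton_right, Finset.mem_Icc]
  rw [rhoSimp, Finset.card_erase_of_mem
      (by simp [Finset.mem_union, Finset.mem_Icc]; omega),
    Finset.card_union_of_disjoint hd, Nat.card_Icc, Finset.card_singleton]
  omega

lemma sigma_mem {p j : ℕ} (hj : j ∈ Finset.Icc 1 (p+1)) :
    sigmaSimp p j ∈ (Lp p).simplicesDim p := by
  rw [mem_simplicesDim', mem_Lp_simplices, sigmaSimp_card hj]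
  refine ⟨⟨fun x hx => ?_, by omega, j, hj, Or.inl Finset.Subset.rfl⟩, rfl⟩
  rw [mem_sigmaSimp] at hx; rw [Finset.mem_Icc]; omega

lemma rho_mem {p j : ℕ} (hj : j ∈ Finset.Icc 1 (p+1)) :
    rhoSimp p j ∈ (Lp p).simplicesDim p := by
  rw [mem_simplicesDim', mem_Lp_simplices, rhoSimp_card hj]
  refine ⟨⟨fun x hx => ?_, by omega, j, hj, Or.inr Finset.Subset.rfl⟩, rfl⟩
  rw [mem_rhoSimp] at hx; rw [Finset.mem_Icc]; omega

lemma mem_simplicesDim_Lp {p : ℕ} {τ : Finset ℕ} :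
    τ ∈ (Lp p).simplicesDim p ↔
      ∃ j ∈ Finset.Icc 1 (p+1), τ = sigmaSimp p j ∨ τ = rhoSimp p j := by
  constructor
  · rintro hτ
    rw [mem_simplicesDim', mem_Lp_simplices] at hτ
    obtain ⟨⟨-, -, j, hj, hc⟩, hcard⟩ := hτ
    refine ⟨j, hj, hc.imp (fun h => ?_) (fun h => ?_)⟩
    · exact Finset.eq_of_subset_of_card_le h (by rw [sigmaSimp_card hj, hcard])
    · exact Finset.eq_of_subset_of_card_le h (by rw [rhoSimp_card hj, hcard])
  · rintro ⟨j, hj, rfl | rfl⟩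
    exacts [sigma_mem hj, rho_mem hj]

lemma sigma_ne_rho {p j k : ℕ} (hj : j ∈ Finset.Icc 1 (p+1)) (hk : k ∈ Finset.Icc 1 (p+1)) :
    sigmaSimp p j ≠ rhoSimp p k := by
  rw [Finset.mem_Icc] at hj hk
  intro h
  have h1 : p+3 ∈ rhoSimp p k := by rw [mem_rhoSimp]; omega
  rw [← h, mem_sigmaSimp] at h1; omega

lemma sigma_inj {p j k : ℕ} (hj : j ∈ Finset.Icc 1 (p+1)) (hk : k ∈ Finset.Icc 1 (p+1))
    (h : sigmaSimp p j = sigmaSimp p k) : j = k := by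
  rw [Finset.mem_Icc] at hj hk
  by_contra hne
  have : j ∈ sigmaSimp p k := by rw [mem_sigmaSimp]; omega
  rw [← h, mem_sigmaSimp] at this; omega

lemma rho_inj {p j k : ℕ} (hj : j ∈ Finset.Icc 1 (p+1)) (hk : k ∈ Finset.Icc 1 (p+1))
    (h : rhoSimp p j = rhoSimp p k) : j = k := by
  rw [Finset.mem_Icc] at hj hk
  by_contra hne
  have : j ∈ rhoSimp p k := by rw [mem_rhoSimp]; omega
  rw [← h, mem_rhoSimp] at this; omega

end RSC
namespace RSC
open SC Finset

lemma sum_ite_pair {S : Finset (Finset ℕ)} (f : {x // x ∈ S} → ZMod 2)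
    (τ a b : Finset ℕ) (ha : a ∈ S) (hb : b ∈ S) (hab : a ≠ b)
    (h : ∀ σ ∈ S, (τ ⊆ σ ↔ σ = a ∨ σ = b)) :
    (∑ σ : {x // x ∈ S}, if τ ⊆ (σ : Finset ℕ) then f σ else 0)
      = f ⟨a, ha⟩ + f ⟨b, hb⟩ := by
  classical
  have key : ∀ σ : {x // x ∈ S}, (if τ ⊆ (σ : Finset ℕ) then f σ else 0)
      = if σ ∈ ({⟨a, ha⟩, ⟨b, hb⟩} : Finset {x // x ∈ S}) then f σ else 0 := by
    intro σ
    have : (τ ⊆ (σ : Finset ℕ)) ↔ σ ∈ ({⟨a, ha⟩, ⟨b, hb⟩} : Finset {x // x ∈ S}) := by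
      rw [h σ.1 σ.2, Finset.mem_insert, Finset.mem_singleton, Subtype.ext_iff,
        Subtype.ext_iff]
    exact if_congr this rfl rfl
  rw [Finset.sum_congr rfl (fun σ _ => key σ), Finset.sum_ite_mem, Finset.univ_inter,
    Finset.sum_pair (by simp [Subtype.ext_iff, hab])]

lemma sum_ite_single {S : Finset (Finset ℕ)} (f : {x // x ∈ S} → ZMod 2)
    (τ a : Finset ℕ) (ha : a ∈ S)
    (h : ∀ σ ∈ S, (τ ⊆ σ ↔ σ = a)) :
    (∑ σ : {x // x ∈ S}, if τ ⊆ (σ : Finset ℕ) then f σ else 0) = f ⟨a, ha⟩ := by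
  classical
  have key : ∀ σ : {x // x ∈ S}, (if τ ⊆ (σ : Finset ℕ) then f σ else 0)
      = if σ ∈ ({⟨a, ha⟩} : Finset {x // x ∈ S}) then f σ else 0 := by
    intro σ
    have : (τ ⊆ (σ : Finset ℕ)) ↔ σ ∈ ({⟨a, ha⟩} : Finset {x // x ∈ S}) := by
      rw [h σ.1 σ.2, Finset.mem_singleton, Subtype.ext_iff]
    exact if_congr this rfl rfl
  rw [Finset.sum_congr rfl (fun σ _ => key σ), Finset.sum_ite_mem, Finset.univ_inter,
    Finset.sum_singleton]

lemma ker_eval {K : SC ℕ} {q : ℕ} {f : Chain K (q+1)}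
    (hf : K.boundary q f = 0) (τ : {x // x ∈ K.simplicesDim q}) :
    (∑ σ : {x // x ∈ K.simplicesDim (q+1)},
      if (τ : Finset ℕ) ⊆ (σ : Finset ℕ) then f σ else 0) = 0 :=
  congrFun hf τ

lemma ker_rel_pair {K : SC ℕ} {q : ℕ} {f : Chain K (q+1)}
    (hf : K.boundary q f = 0) {τ a b : Finset ℕ}
    (hτ : τ ∈ K.simplicesDim q)
    (ha : a ∈ K.simplicesDim (q+1)) (hb : b ∈ K.simplicesDim (q+1)) (hab : a ≠ b)
    (h : ∀ σ ∈ K.simplicesDim (q+1), (τ ⊆ σ ↔ σ = a ∨ σ = b)) :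
    f ⟨a, ha⟩ = f ⟨b, hb⟩ := by
  refine zmod2_add_eq_zero _ _ ?_
  rw [← sum_ite_pair f τ a b ha hb hab h]
  exact ker_eval hf ⟨τ, hτ⟩

lemma ker_rel_single {K : SC ℕ} {q : ℕ} {f : Chain K (q+1)}
    (hf : K.boundary q f = 0) {τ a : Finset ℕ}
    (hτ : τ ∈ K.simplicesDim q) (ha : a ∈ K.simplicesDim (q+1))
    (h : ∀ σ ∈ K.simplicesDim (q+1), (τ ⊆ σ ↔ σ = a)) :
    f ⟨a, ha⟩ = 0 := by
  rw [← sum_ite_single f τ a ha h]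
  exact ker_eval hf ⟨τ, hτ⟩

end RSC
namespace RSC
open SC Finset

lemma coface_tau1 {p j k : ℕ} (hj : j ∈ Finset.Icc 1 (p+1)) (hk : k ∈ Finset.Icc 1 (p+1))
    {σ : Finset ℕ} (hσ : σ ∈ (Lp p).simplicesDim p) :
    Finset.Icc 1 (p+2) \ {j, k} ⊆ σ ↔ σ = sigmaSimp p j ∨ σ = sigmaSimp p k := by
  rw [Finset.mem_Icc] at hj hk
  obtain ⟨l, hl, rfl | rfl⟩ := mem_simplicesDim_Lp.mp hσ <;> rw [Finset.mem_Icc] at hl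
  · rw [subset_sigmaSimp]
    constructor
    · rintro ⟨-, hl'⟩
      have : l ∈ Finset.Icc 1 (p+2) \ {j, k} ∨ l = j ∨ l = k := by
        simp only [Finset.mem_sdiff, Finset.mem_Icc, Finset.mem_insert,
          Finset.mem_singleton]
        omega
      rcases this with h | h | h
      · exact absurd h hl'
      · exact Or.inl (by rw [h])
      · exact Or.inr (by rw [h])
    · rintro (h | h) <;>
        (first
          | exact ⟨Finset.sdiff_subset, by
              have := sigma_inj (p := p) (j := l)
                (by rw [Finset.mem_Icc]; omega) (by rw [Finset.mem_Icc]; omega) h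
              simp only [Finset.mem_sdiff, Finset.mem_Icc, Finset.mem_insert,
                Finset.mem_singleton]
              omega⟩)
  · constructor
    · intro hsub
      exfalso
      have h2 : p + 2 ∈ Finset.Icc 1 (p+2) \ {j, k} := by
        simp only [Finset.mem_sdiff, Finset.mem_Icc, Finset.mem_insert,
          Finset.mem_singleton]
        omega
      have := hsub h2
      rw [mem_rhoSimp] at this; omega
    · rintro (h | h) <;>
        exact absurd h.symm (sigma_ne_rho (by rw [Finset.mem_Icc]; omega)
          (by rw [Finset.mem_Icc]; omega))

lemma coface_tau2 {p j k : ℕ} (hj : j ∈ Finset.Icc 1 (p+1)) (hk : k ∈ Finset.Icc 1 (p+1))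
    {σ : Finset ℕ} (hσ : σ ∈ (Lp p).simplicesDim p) :
    (Finset.Icc 1 (p+1) ∪ {p+3}) \ {j, k} ⊆ σ ↔ σ = rhoSimp p j ∨ σ = rhoSimp p k := by
  rw [Finset.mem_Icc] at hj hk
  obtain ⟨l, hl, rfl | rfl⟩ := mem_simplicesDim_Lp.mp hσ <;> rw [Finset.mem_Icc] at hl
  · constructor
    · intro hsub
      exfalso
      have h2 : p + 3 ∈ (Finset.Icc 1 (p+1) ∪ {p+3}) \ {j, k} := by
        simp only [Finset.mem_sdiff, Finset.mem_union, Finset.mem_Icc,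
          Finset.mem_insert, Finset.mem_singleton, or_true, true_and]
        omega
      have := hsub h2
      rw [mem_sigmaSimp] at this; omega
    · rintro (h | h) <;>
        exact absurd h (sigma_ne_rho (by rw [Finset.mem_Icc]; omega)
          (by rw [Finset.mem_Icc]; omega))
  · rw [subset_rhoSimp]
    constructor
    · rintro ⟨-, hl'⟩
      have : l ∈ (Finset.Icc 1 (p+1) ∪ {p+3}) \ {j, k} ∨ l = j ∨ l = k := by
        simp only [Finset.mem_sdiff, Finset.mem_union, Finset.mem_Icc,
          Finset.mem_insert, Finset.mem_singleton]
        omega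
      rcases this with h | h | h
      · exact absurd h hl'
      · exact Or.inl (by rw [h])
      · exact Or.inr (by rw [h])
    · rintro (h | h) <;>
        (first
          | exact ⟨Finset.sdiff_subset, by
              have := rho_inj (p := p) (j := l)
                (by rw [Finset.mem_Icc]; omega) (by rw [Finset.mem_Icc]; omega) h
              simp only [Finset.mem_sdiff, Finset.mem_union, Finset.mem_Icc,
                Finset.mem_insert, Finset.mem_singleton]
              omega⟩)

lemma coface_tau3 {p j : ℕ} (hj : j ∈ Finset.Icc 1 (p+1))
    {σ : Finset ℕ} (hσ : σ ∈ (Lp p).simplicesDim p) :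
    (Finset.Icc 1 (p+1)).erase j ⊆ σ ↔ σ = sigmaSimp p j ∨ σ = rhoSimp p j := by
  rw [Finset.mem_Icc] at hj
  have hsubC : ∀ l, 1 ≤ l → l ≤ p + 1 →
      (l ∉ (Finset.Icc 1 (p+1)).erase j ↔ l = j) := by
    intro l h1 h2
    simp only [Finset.mem_erase, Finset.mem_Icc]
    omega
  obtain ⟨l, hl, rfl | rfl⟩ := mem_simplicesDim_Lp.mp hσ <;> rw [Finset.mem_Icc] at hl
  · rw [subset_sigmaSimp]
    constructor
    · rintro ⟨-, hl'⟩
      exact Or.inl (by rw [(hsubC l hl.1 hl.2).mp hl'])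
    · rintro (h | h)
      · refine ⟨fun x hx => ?_, ?_⟩
        · simp only [Finset.mem_erase, Finset.mem_Icc] at hx
          rw [Finset.mem_Icc]; omega
        · have := sigma_inj (p := p) (j := l)
            (by rw [Finset.mem_Icc]; omega) (by rw [Finset.mem_Icc]; omega) h
          rw [hsubC l hl.1 hl.2]; omega
      · exact absurd h (sigma_ne_rho (by rw [Finset.mem_Icc]; omega)
          (by rw [Finset.mem_Icc]; omega))
  · rw [subset_rhoSimp]
    constructor
    · rintro ⟨-, hl'⟩
      exact Or.inr (by rw [(hsubC l hl.1 hl.2).mp hl'])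
    · rintro (h | h)
      · exact absurd h.symm (sigma_ne_rho (by rw [Finset.mem_Icc]; omega)
          (by rw [Finset.mem_Icc]; omega))
      · refine ⟨fun x hx => ?_, ?_⟩
        · simp only [Finset.mem_erase, Finset.mem_Icc] at hx
          simp only [Finset.mem_union, Finset.mem_Icc, Finset.mem_singleton]; omega
        · have := rho_inj (p := p) (j := l)
            (by rw [Finset.mem_Icc]; omega) (by rw [Finset.mem_Icc]; omega) h
          rw [hsubC l hl.1 hl.2]; omega

end RSC
namespace RSC
open SC Finset

lemma tau1_mem {q j k : ℕ} (hj : j ∈ Finset.Icc 1 (q+2)) (hk : k ∈ Finset.Icc 1 (q+2))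
    (hjk : j ≠ k) :
    Finset.Icc 1 (q+3) \ {j, k} ∈ (Lp (q+1)).simplicesDim q := by
  rw [Finset.mem_Icc] at hj hk
  have hsub : ({j, k} : Finset ℕ) ⊆ Finset.Icc 1 (q+3) := by
    intro x hx
    simp only [Finset.mem_insert, Finset.mem_singleton] at hx
    rw [Finset.mem_Icc]; omega
  have hcard : (Finset.Icc 1 (q+3) \ {j, k}).card = q + 1 := by
    rw [Finset.card_sdiff_of_subset hsub, Finset.card_pair hjk, Nat.card_Icc]
    omega
  rw [mem_simplicesDim', mem_Lp_simplices, hcard]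
  refine ⟨⟨fun x hx => ?_, by omega, j, by rw [Finset.mem_Icc]; omega,
    Or.inl (subset_sigmaSimp.mpr ⟨Finset.sdiff_subset, by
      simp only [Finset.mem_sdiff, Finset.mem_insert, Finset.mem_singleton]
      tauto⟩)⟩, rfl⟩
  have := Finset.sdiff_subset hx
  rw [Finset.mem_Icc] at this ⊢; omega

lemma tau2_mem {q j k : ℕ} (hj : j ∈ Finset.Icc 1 (q+2)) (hk : k ∈ Finset.Icc 1 (q+2))
    (hjk : j ≠ k) :
    (Finset.Icc 1 (q+2) ∪ {q+4}) \ {j, k} ∈ (Lp (q+1)).simplicesDim q := by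
  rw [Finset.mem_Icc] at hj hk
  have hsub : ({j, k} : Finset ℕ) ⊆ Finset.Icc 1 (q+2) ∪ {q+4} := by
    intro x hx
    simp only [Finset.mem_insert, Finset.mem_singleton] at hx
    simp only [Finset.mem_union, Finset.mem_Icc, Finset.mem_singleton]; omega
  have hU : (Finset.Icc 1 (q+2) ∪ {q+4}).card = q + 3 := by
    rw [Finset.card_union_of_disjoint (by
      simp [Finset.disjoint_singleton_right, Finset.mem_Icc])]
    rw [Nat.card_Icc, Finset.card_singleton]
    omega
  have hcard : ((Finset.Icc 1 (q+2) ∪ {q+4}) \ {j, k}).card = q + 1 := by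
    rw [Finset.card_sdiff_of_subset hsub, Finset.card_pair hjk, hU]
    omega
  rw [mem_simplicesDim', mem_Lp_simplices, hcard]
  refine ⟨⟨fun x hx => ?_, by omega, j, by rw [Finset.mem_Icc]; omega,
    Or.inr (subset_rhoSimp.mpr ⟨Finset.sdiff_subset, by
      simp only [Finset.mem_sdiff, Finset.mem_insert, Finset.mem_singleton]
      tauto⟩)⟩, rfl⟩
  have := Finset.sdiff_subset hx
  simp only [Finset.mem_union, Finset.mem_Icc, Finset.mem_singleton] at this
  rw [Finset.mem_Icc]; omega

lemma tau3_mem {q j : ℕ} (hj : j ∈ Finset.Icc 1 (q+2)) :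
    (Finset.Icc 1 (q+2)).erase j ∈ (Lp (q+1)).simplicesDim q := by
  have hj' := hj
  rw [Finset.mem_Icc] at hj'
  have hcard : ((Finset.Icc 1 (q+2)).erase j).card = q + 1 := by
    rw [Finset.card_erase_of_mem hj, Nat.card_Icc]
    omega
  rw [mem_simplicesDim', mem_Lp_simplices, hcard]
  refine ⟨⟨fun x hx => ?_, by omega, j, hj,
    Or.inl (subset_sigmaSimp.mpr ⟨fun x hx => ?_, Finset.notMem_erase _ _⟩)⟩, rfl⟩
  · rw [Finset.mem_erase, Finset.mem_Icc] at hx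
    rw [Finset.mem_Icc]; omega
  · rw [Finset.mem_erase, Finset.mem_Icc] at hx
    rw [Finset.mem_Icc]; omega

lemma exists_pair_cofaces {q : ℕ} {τ : Finset ℕ}
    (hτ : τ ∈ (Lp (q+1)).simplicesDim q) :
    ∃ a b, a ≠ b ∧ ∃ (ha : a ∈ (Lp (q+1)).simplicesDim (q+1))
      (hb : b ∈ (Lp (q+1)).simplicesDim (q+1)), True ∧
      ∀ σ ∈ (Lp (q+1)).simplicesDim (q+1), (τ ⊆ σ ↔ σ = a ∨ σ = b) := by
  obtain ⟨hmem, hcard⟩ := mem_simplicesDim'.mp hτ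
  obtain ⟨hsub3, -, j0, hj0, hc⟩ := mem_Lp_simplices.mp hmem
  have hC : τ ⊆ Finset.Icc 1 (q+2) →
      ∃ a b, a ≠ b ∧ ∃ (ha : a ∈ (Lp (q+1)).simplicesDim (q+1))
        (hb : b ∈ (Lp (q+1)).simplicesDim (q+1)), True ∧
        ∀ σ ∈ (Lp (q+1)).simplicesDim (q+1), (τ ⊆ σ ↔ σ = a ∨ σ = b) := by
    intro hτC
    have hCc : (Finset.Icc 1 (q+2) \ τ).card = 1 := by
      rw [Finset.card_sdiff_of_subset hτC, Nat.card_Icc, hcard]; omega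
    obtain ⟨j, hset⟩ := Finset.card_eq_one.mp hCc
    have hjm : j ∈ Finset.Icc 1 (q+2) := by
      have : j ∈ Finset.Icc 1 (q+2) \ τ := hset ▸ Finset.mem_singleton_self j
      exact (Finset.mem_sdiff.mp this).1
    have hτeq : τ = (Finset.Icc 1 (q+2)).erase j := by
      rw [Finset.erase_eq, ← hset, Finset.sdiff_sdiff_eq_self hτC]
    exact ⟨sigmaSimp (q+1) j, rhoSimp (q+1) j, sigma_ne_rho hjm hjm,
      sigma_mem hjm, rho_mem hjm, trivial,
      fun σ hσ => hτeq ▸ coface_tau3 hjm hσ⟩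
  rcases hc with hσ | hρ
  · have hτA : τ ⊆ Finset.Icc 1 (q+3) := (subset_sigmaSimp.mp hσ).1
    by_cases h2 : q + 3 ∈ τ
    · have hAc : (Finset.Icc 1 (q+3) \ τ).card = 2 := by
        rw [Finset.card_sdiff_of_subset hτA, Nat.card_Icc, hcard]; omega
      obtain ⟨j, k, hjk, hset⟩ := Finset.card_eq_two.mp hAc
      have hjm : j ∈ Finset.Icc 1 (q+2) := by
        have : j ∈ Finset.Icc 1 (q+3) \ τ := hset ▸ by simp
        rw [Finset.mem_sdiff, Finset.mem_Icc] at this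
        rw [Finset.mem_Icc]
        rcases this with ⟨h1, h2'⟩
        have : j ≠ q + 3 := fun he => h2' (he ▸ h2)
        omega
      have hkm : k ∈ Finset.Icc 1 (q+2) := by
        have : k ∈ Finset.Icc 1 (q+3) \ τ := hset ▸ by simp
        rw [Finset.mem_sdiff, Finset.mem_Icc] at this
        rw [Finset.mem_Icc]
        rcases this with ⟨h1, h2'⟩
        have : k ≠ q + 3 := fun he => h2' (he ▸ h2)
        omega
      have hτeq : τ = Finset.Icc 1 (q+3) \ {j, k} := by
        rw [← hset, Finset.sdiff_sdiff_eq_self hτA]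
      exact ⟨sigmaSimp (q+1) j, sigmaSimp (q+1) k,
        fun h => hjk (sigma_inj hjm hkm h), sigma_mem hjm, sigma_mem hkm, trivial,
        fun σ hσ' => hτeq ▸ coface_tau1 hjm hkm hσ'⟩
    · refine hC (fun x hx => ?_)
      have h1 := hτA hx
      rw [Finset.mem_Icc] at h1 ⊢
      have : x ≠ q + 3 := fun he => h2 (he ▸ hx)
      omega
  · have hτB : τ ⊆ Finset.Icc 1 (q+2) ∪ {q+4} := (subset_rhoSimp.mp hρ).1
    by_cases h3 : q + 4 ∈ τ
    · have hU : (Finset.Icc 1 (q+2) ∪ {q+4}).card = q + 3 := by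
        rw [Finset.card_union_of_disjoint (by
          simp [Finset.disjoint_singleton_right, Finset.mem_Icc])]
        rw [Nat.card_Icc, Finset.card_singleton]
        omega
      have hBc : ((Finset.Icc 1 (q+2) ∪ {q+4}) \ τ).card = 2 := by
        rw [Finset.card_sdiff_of_subset hτB, hU, hcard]; omega
      obtain ⟨j, k, hjk, hset⟩ := Finset.card_eq_two.mp hBc
      have hjm : j ∈ Finset.Icc 1 (q+2) := by
        have : j ∈ (Finset.Icc 1 (q+2) ∪ {q+4}) \ τ := hset ▸ by simp
        rw [Finset.mem_sdiff, Finset.mem_union, Finset.mem_Icc,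
          Finset.mem_singleton] at this
        rw [Finset.mem_Icc]
        rcases this with ⟨h1, h2'⟩
        have : j ≠ q + 4 := fun he => h2' (he ▸ h3)
        omega
      have hkm : k ∈ Finset.Icc 1 (q+2) := by
        have : k ∈ (Finset.Icc 1 (q+2) ∪ {q+4}) \ τ := hset ▸ by simp
        rw [Finset.mem_sdiff, Finset.mem_union, Finset.mem_Icc,
          Finset.mem_singleton] at this
        rw [Finset.mem_Icc]
        rcases this with ⟨h1, h2'⟩
        have : k ≠ q + 4 := fun he => h2' (he ▸ h3)
        omega
      have hτeq : τ = (Finset.Icc 1 (q+2) ∪ {q+4}) \ {j, k} := by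
        rw [← hset, Finset.sdiff_sdiff_eq_self hτB]
      exact ⟨rhoSimp (q+1) j, rhoSimp (q+1) k,
        fun h => hjk (rho_inj hjm hkm h), rho_mem hjm, rho_mem hkm, trivial,
        fun σ hσ' => hτeq ▸ coface_tau2 hjm hkm hσ'⟩
    · refine hC (fun x hx => ?_)
      have h1 := hτB hx
      rw [Finset.mem_union, Finset.mem_Icc, Finset.mem_singleton] at h1
      rw [Finset.mem_Icc]
      have : x ≠ q + 4 := fun he => h3 (he ▸ hx)
      omega

end RSC
namespace RSC
open SC Finset

lemma cycleRank_succ {V : Type*} [DecidableEq V] (K : SC V) (q : ℕ) :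
    K.cycleRank (q+1) = Module.finrank (ZMod 2) (LinearMap.ker (K.boundary q)) := rfl

lemma range_rank_zero (K : SC ℕ) (n : ℕ) (h : K.simplicesDim (n+1) = ∅) :
    Module.finrank (ZMod 2) (LinearMap.range (K.boundary n)) = 0 := by
  haveI : IsEmpty {x // x ∈ K.simplicesDim (n+1)} :=
    ⟨fun x => Finset.notMem_empty x.1 (h ▸ x.2)⟩
  have hb : K.boundary n = 0 := by
    apply LinearMap.ext
    intro f
    funext τ
    show (∑ σ : {x // x ∈ K.simplicesDim (n+1)},
      if (τ : Finset ℕ) ⊆ (σ : Finset ℕ) then f σ else 0) = 0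
    rw [Finset.univ_eq_empty, Finset.sum_empty]
  rw [hb, LinearMap.range_zero, finrank_bot]

lemma Lp_simplicesDim_succ_empty (p : ℕ) : (Lp p).simplicesDim (p+1) = ∅ := by
  rw [Finset.eq_empty_iff_forall_notMem]
  intro σ hσ
  obtain ⟨hmem, hcard⟩ := mem_simplicesDim'.mp hσ
  obtain ⟨-, -, j, hj, hc⟩ := mem_Lp_simplices.mp hmem
  rcases hc with h | h
  · have := Finset.card_le_card h
    rw [hcard, sigmaSimp_card hj] at this; omega
  · have := Finset.card_le_card h
    rw [hcard, rhoSimp_card hj] at this; omega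

lemma mem_simplicesDim_induced {K : SC ℕ} {I : Finset ℕ} {n : ℕ} {σ : Finset ℕ} :
    σ ∈ (K.induced I).simplicesDim n ↔ σ ∈ K.simplicesDim n ∧ σ ⊆ I := by
  simp only [simplicesDim, induced, Finset.mem_filter]
  tauto

lemma induced_simplicesDim_succ_empty (p : ℕ) (I : Finset ℕ) :
    ((Lp p).induced I).simplicesDim (p+1) = ∅ := by
  rw [Finset.eq_empty_iff_forall_notMem]
  intro σ hσ
  have := (mem_simplicesDim_induced.mp hσ).1
  rw [Lp_simplicesDim_succ_empty] at this
  exact Finset.notMem_empty _ this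

lemma one_mem_J (q : ℕ) : (1 : ℕ) ∈ Finset.Icc 1 (q+2) := by
  rw [Finset.mem_Icc]; omega

lemma cycle_const {q : ℕ} {f : Chain (Lp (q+1)) (q+1)}
    (hf : (Lp (q+1)).boundary q f = 0) (σ : {x // x ∈ (Lp (q+1)).simplicesDim (q+1)}) :
    f σ = f ⟨sigmaSimp (q+1) 1, sigma_mem (one_mem_J q)⟩ := by
  obtain ⟨j, hj, hc⟩ := mem_simplicesDim_Lp.mp σ.2
  have hfj : f ⟨sigmaSimp (q+1) j, sigma_mem hj⟩
      = f ⟨sigmaSimp (q+1) 1, sigma_mem (one_mem_J q)⟩ := by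
    rcases eq_or_ne j 1 with rfl | hne
    · rfl
    · exact ker_rel_pair hf (tau1_mem hj (one_mem_J q) hne) (sigma_mem hj)
        (sigma_mem (one_mem_J q)) (fun h => hne (sigma_inj hj (one_mem_J q) h))
        (fun σ' hσ' => coface_tau1 hj (one_mem_J q) hσ')
  rcases hc with h | h
  · have : σ = ⟨sigmaSimp (q+1) j, sigma_mem hj⟩ := Subtype.ext h
    rw [this]; exact hfj
  · have hσρ : σ = ⟨rhoSimp (q+1) j, rho_mem hj⟩ := Subtype.ext h
    have hrel : f ⟨sigmaSimp (q+1) j, sigma_mem hj⟩ = f ⟨rhoSimp (q+1) j, rho_mem hj⟩ :=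
      ker_rel_pair hf (tau3_mem hj) (sigma_mem hj) (rho_mem hj)
        (sigma_ne_rho hj hj) (fun σ' hσ' => coface_tau3 hj hσ')
    rw [hσρ, ← hrel]; exact hfj

set_option maxHeartbeats 1000000 in
lemma allones_mem_ker (q : ℕ) :
    ((fun _ => 1 : Chain (Lp (q+1)) (q+1))) ∈ LinearMap.ker ((Lp (q+1)).boundary q) := by
  rw [LinearMap.mem_ker]
  funext τ
  show (∑ σ : {x // x ∈ (Lp (q+1)).simplicesDim (q+1)},
    if (τ : Finset ℕ) ⊆ (σ : Finset ℕ) then (1 : ZMod 2) else 0) = 0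
  obtain ⟨a, b, hab, ha, hb, -, h⟩ := exists_pair_cofaces τ.2
  rw [sum_ite_pair (fun _ => 1) τ.1 a b ha hb hab h]
  decide

lemma ker_boundary_Lp (q : ℕ) :
    LinearMap.ker ((Lp (q+1)).boundary q)
      = Submodule.span (ZMod 2) {(fun _ => 1 : Chain (Lp (q+1)) (q+1))} := by
  apply le_antisymm
  · intro f hf
    rw [LinearMap.mem_ker] at hf
    rw [Submodule.mem_span_singleton]
    refine ⟨f ⟨sigmaSimp (q+1) 1, sigma_mem (one_mem_J q)⟩, ?_⟩
    funext σ
    rw [Pi.smul_apply, smul_eq_mul, mul_one, cycle_const hf σ]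
  · rw [Submodule.span_le, Set.singleton_subset_iff]
    exact allones_mem_ker q

lemma cycleRank_Lp (q : ℕ) : (Lp (q+1)).cycleRank (q+1) = 1 := by
  rw [cycleRank_succ, ker_boundary_Lp]
  refine finrank_span_singleton ?_
  intro h
  have := congrFun h ⟨sigmaSimp (q+1) 1, sigma_mem (one_mem_J q)⟩
  exact one_ne_zero this

end RSC
namespace RSC
open SC Finset

lemma betti_def (K : SC ℕ) (n : ℕ) :
    K.betti n = K.cycleRank n
      - Module.finrank (ZMod 2) (LinearMap.range (K.boundary n)) := rfl

lemma coface_tau1' {q j k : ℕ} (hj : j ∈ Finset.Icc 1 (q+2)) (hk : k ∈ Finset.Icc 1 (q+2))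
    {σ : Finset ℕ} (hσ : σ ∈ (Lp (q+1)).simplicesDim (q+1)) :
    Finset.Icc 1 (q+3) \ {j, k} ⊆ σ ↔ σ = sigmaSimp (q+1) j ∨ σ = sigmaSimp (q+1) k :=
  coface_tau1 hj hk hσ

lemma coface_tau2' {q j k : ℕ} (hj : j ∈ Finset.Icc 1 (q+2)) (hk : k ∈ Finset.Icc 1 (q+2))
    {σ : Finset ℕ} (hσ : σ ∈ (Lp (q+1)).simplicesDim (q+1)) :
    (Finset.Icc 1 (q+2) ∪ {q+4}) \ {j, k} ⊆ σ ↔ σ = rhoSimp (q+1) j ∨ σ = rhoSimp (q+1) k :=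
  coface_tau2 hj hk hσ

lemma induced_ker_eq_bot {q v : ℕ} (hv : v ∈ Finset.Icc 1 (q+4)) :
    LinearMap.ker (((Lp (q+1)).induced ((Finset.Icc 1 (q+4)).erase v)).boundary q)
      = ⊥ := by
  set I : Finset ℕ := (Finset.Icc 1 (q+4)).erase v with hIdef
  set K : SC ℕ := (Lp (q+1)).induced I with hKdef
  rw [Finset.mem_Icc] at hv
  rw [Submodule.eq_bot_iff]
  intro f hf
  rw [LinearMap.mem_ker] at hf
  funext σ
  show f σ = 0
  obtain ⟨hσLp, hσI⟩ := mem_simplicesDim_induced.mp σ.2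
  obtain ⟨hσIcc, hvσ⟩ := Finset.subset_erase.mp hσI
  obtain ⟨j, hj, hc⟩ := mem_simplicesDim_Lp.mp hσLp
  have hj' := hj
  rw [Finset.mem_Icc] at hj'
  -- generic: v not in any σ' of the induced complex
  have hnotv : ∀ σ' ∈ K.simplicesDim (q+1), v ∉ σ' := fun σ' hσ' =>
    (Finset.subset_erase.mp (mem_simplicesDim_induced.mp hσ').2).2
  by_cases hv4 : v = q + 4
  · rcases hc with h | h
    · -- σ = σ_j, relation from τ₃ = Icc 1 (q+2) \ {j}
      have hτmem : (Finset.Icc 1 (q+2)).erase j ∈ K.simplicesDim q := by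
        refine mem_simplicesDim_induced.mpr ⟨tau3_mem hj, Finset.subset_erase.mpr
          ⟨fun x hx => ?_, fun hx => ?_⟩⟩
        · rw [Finset.mem_erase, Finset.mem_Icc] at hx
          rw [Finset.mem_Icc]; omega
        · rw [Finset.mem_erase, Finset.mem_Icc] at hx; omega
      have hcof : ∀ σ' ∈ K.simplicesDim (q+1),
          ((Finset.Icc 1 (q+2)).erase j ⊆ σ' ↔ σ' = σ.1) := by
        intro σ' hσ'
        have hLp' := (mem_simplicesDim_induced.mp hσ').1
        rw [coface_tau3 hj hLp', h]
        constructor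
        · rintro (h' | h')
          · exact h'
          · exfalso
            refine hnotv σ' hσ' ?_
            rw [h', mem_rhoSimp, hv4]; omega
        · exact Or.inl
      exact ker_rel_single hf hτmem σ.2 hcof
    · exfalso
      refine hvσ ?_
      rw [h, mem_rhoSimp, hv4]; omega
  · by_cases hv3 : v = q + 3
    · rcases hc with h | h
      · exfalso
        refine hvσ ?_
        rw [h, mem_sigmaSimp, hv3]; omega
      · have hτmem : (Finset.Icc 1 (q+2)).erase j ∈ K.simplicesDim q := by
          refine mem_simplicesDim_induced.mpr ⟨tau3_mem hj, Finset.subset_erase.mpr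
            ⟨fun x hx => ?_, fun hx => ?_⟩⟩
          · rw [Finset.mem_erase, Finset.mem_Icc] at hx
            rw [Finset.mem_Icc]; omega
          · rw [Finset.mem_erase, Finset.mem_Icc] at hx; omega
        have hcof : ∀ σ' ∈ K.simplicesDim (q+1),
            ((Finset.Icc 1 (q+2)).erase j ⊆ σ' ↔ σ' = σ.1) := by
          intro σ' hσ'
          have hLp' := (mem_simplicesDim_induced.mp hσ').1
          rw [coface_tau3 hj hLp', h]
          constructor
          · rintro (h' | h')
            · exfalso
              refine hnotv σ' hσ' ?_
              rw [h', mem_sigmaSimp, hv3]; omega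
            · exact h'
          · exact Or.inr
        exact ker_rel_single hf hτmem σ.2 hcof
    · -- v ∈ {1, ..., q+2}
      have hvJ : v ∈ Finset.Icc 1 (q+2) := by rw [Finset.mem_Icc]; omega
      set k : ℕ := if v = 1 then 2 else 1 with hkdef
      have hk : k ∈ Finset.Icc 1 (q+2) := by
        rw [Finset.mem_Icc, hkdef]; split <;> omega
      have hvk : v ≠ k := by rw [hkdef]; split <;> omega
      have hjv : j = v := by
        by_contra hne
        rcases hc with h | h
        · refine hvσ ?_
          rw [h, mem_sigmaSimp]
          refine ⟨fun he => hne he.symm, by omega⟩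
        · refine hvσ ?_
          rw [h, mem_rhoSimp]
          exact ⟨fun he => hne he.symm, Or.inl (by omega)⟩
      rcases hc with h | h <;> rw [hjv] at h
      · -- σ = σ_v; use τ₁ = Icc 1 (q+3) \ {v, k}
        have hτmem : Finset.Icc 1 (q+3) \ {v, k} ∈ K.simplicesDim q := by
          refine mem_simplicesDim_induced.mpr ⟨tau1_mem hvJ hk hvk,
            Finset.subset_erase.mpr ⟨fun x hx => ?_, fun hx => ?_⟩⟩
          · rw [Finset.mem_sdiff, Finset.mem_Icc] at hx
            rw [Finset.mem_Icc]; omega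
          · rw [Finset.mem_sdiff] at hx
            exact hx.2 (by simp)
        have hcof : ∀ σ' ∈ K.simplicesDim (q+1),
            (Finset.Icc 1 (q+3) \ {v, k} ⊆ σ' ↔ σ' = σ.1) := by
          intro σ' hσ'
          have hLp' := (mem_simplicesDim_induced.mp hσ').1
          rw [coface_tau1' hvJ hk hLp', h]
          constructor
          · rintro (h' | h')
            · exact h'
            · exfalso
              refine hnotv σ' hσ' ?_
              rw [h', mem_sigmaSimp]
              exact ⟨hvk, by omega⟩
          · exact Or.inl
        exact ker_rel_single hf hτmem σ.2 hcof
      · -- σ = ρ_v; use τ₂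
        have hτmem : (Finset.Icc 1 (q+2) ∪ {q+4}) \ {v, k} ∈ K.simplicesDim q := by
          refine mem_simplicesDim_induced.mpr ⟨tau2_mem hvJ hk hvk,
            Finset.subset_erase.mpr ⟨fun x hx => ?_, fun hx => ?_⟩⟩
          · rw [Finset.mem_sdiff, Finset.mem_union, Finset.mem_Icc,
              Finset.mem_singleton] at hx
            rw [Finset.mem_Icc]; omega
          · rw [Finset.mem_sdiff] at hx
            exact hx.2 (by simp)
        have hcof : ∀ σ' ∈ K.simplicesDim (q+1),
            ((Finset.Icc 1 (q+2) ∪ {q+4}) \ {v, k} ⊆ σ' ↔ σ' = σ.1) := by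
          intro σ' hσ'
          have hLp' := (mem_simplicesDim_induced.mp hσ').1
          rw [coface_tau2' hvJ hk hLp', h]
          constructor
          · rintro (h' | h')
            · exact h'
            · exfalso
              refine hnotv σ' hσ' ?_
              rw [h', mem_rhoSimp]
              exact ⟨hvk, Or.inl (by omega)⟩
          · exact Or.inl
        exact ker_rel_single hf hτmem σ.2 hcof

end RSC

open RSC RSC.SC in
theorem betti_Lp (p : ℕ) (hp : 1 ≤ p) :
    (Lp p).betti p = 1 ∧
      ∀ I ⊆ Finset.Icc 1 (p + 3), I.card = p + 2 → ((Lp p).induced I).betti p = 0 := by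
  obtain ⟨q, rfl⟩ : ∃ q, p = q + 1 := ⟨p - 1, by omega⟩
  constructor
  · rw [betti_def, cycleRank_Lp,
      range_rank_zero _ _ (Lp_simplicesDim_succ_empty (q+1))]
  · intro I hI hIcard
    obtain ⟨v, hvmem, rfl⟩ :
        ∃ v ∈ Finset.Icc 1 (q+4), I = (Finset.Icc 1 (q+4)).erase v := by
      have hI' : I ⊆ Finset.Icc 1 (q+4) := hI
      have hc : ((Finset.Icc 1 (q+4)) \ I).card = 1 := by
        rw [Finset.card_sdiff_of_subset hI', Nat.card_Icc, hIcard]; omega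
      obtain ⟨v, hv⟩ := Finset.card_eq_one.mp hc
      have hvm : v ∈ Finset.Icc 1 (q+4) := by
        have : v ∈ Finset.Icc 1 (q+4) \ I := hv ▸ Finset.mem_singleton_self v
        exact (Finset.mem_sdiff.mp this).1
      refine ⟨v, hvm, ?_⟩
      rw [Finset.erase_eq, ← hv]
      exact (Finset.sdiff_sdiff_eq_self hI').symm
    rw [betti_def, cycleRank_succ, induced_ker_eq_bot hvmem, finrank_bot]
    omega
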